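/- Every analytic subset of M is universally measurable: for every analytic set A ⊆ M and every finite measure μ on (M,B) there exist Borel sets B⁻, B⁺ ∈ B with B⁻ ⊆ A ⊆ B⁺ and μ(B⁺ \ B⁻) = 0. -/

import Mathlib

open MeasureTheory Filter Set
open scoped ENNReal Topology



namespace Stmt7Aux

noncomputable section

/-- the set of sequences bounded by `f` on coordinates `< n` -/
def D (f : ℕ → ℕ) (n : ℕ) : Set (ℕ → ℕ) := {x | ∀ i < n, x i ≤ f i}

lemma D_zero (f : ℕ → ℕ) : D f 0 = univ := by ext x; simp [D]

lemma D_anti (f : ℕ → ℕ) : Antitone (D f) := fun n m h x hx i hi => hx i (lt_of_lt_of_le hi h)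

lemma D_congr {f g : ℕ → ℕ} (n : ℕ) (h : ∀ i < n, f i = g i) : D f n = D g n := by
  ext x; constructor <;> intro hx i hi
  · rw [← h i hi]; exact hx i hi
  · rw [h i hi]; exact hx i hi

lemma D_union (f : ℕ → ℕ) (n : ℕ) : (⋃ k, D (Function.update f n k) (n+1)) = D f n := by
  ext x
  simp only [mem_iUnion]
  constructor
  · rintro ⟨k, hk⟩ i hi
    have := hk i (hi.trans (Nat.lt_succ_self n))
    rwa [Function.update_of_ne hi.ne] at this
  · intro hx
    refine ⟨x n, fun i hi => ?_⟩
    rcases Nat.lt_succ_iff_lt_or_eq.1 hi with h | h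
    · rw [Function.update_of_ne h.ne]; exact hx i h
    · subst h; simp
lemma D_mono_update (f : ℕ → ℕ) (n : ℕ) :
    Monotone (fun k => D (Function.update f n k) (n+1)) := by
  intro k k' hk x hx i hi
  rcases Nat.lt_succ_iff_lt_or_eq.1 hi with h | h
  · have := hx i hi; rwa [Function.update_of_ne h.ne] at this ⊢
  · subst h
    have := hx i (Nat.lt_succ_self _)
    simp only [Function.update_self] at this ⊢
    exact this.trans hk

variable (τ : (ℕ → ℕ) → (ℕ → Bool)) (μ : Measure (ℕ → Bool)) [IsFiniteMeasure μ]

/-- greedy choice of a bound for the next coordinate -/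
lemma step (hτ : Continuous τ) (f : ℕ → ℕ) (n : ℕ) (δ : ℝ≥0∞) (hδ : δ ≠ 0) :
    ∃ k, μ (τ '' D f n) ≤ μ (τ '' D (Function.update f n k) (n+1)) + δ := by
  have h1 : μ (τ '' D f n) = ⨆ k, μ (τ '' D (Function.update f n k) (n+1)) := by
    rw [← Monotone.measure_iUnion (fun k k' h => image_mono (D_mono_update f n h))]
    rw [← image_iUnion, D_union]
  set v := μ (τ '' D f n) with hv
  rcases le_or_gt v δ with h | h
  · exact ⟨0, h.trans le_add_self⟩
  · have hvt : v ≠ ⊤ := measure_ne_top μ _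
    have h2 : v - δ < v := ENNReal.sub_lt_self hvt (fun h0 => by simp [h0] at h) hδ
    have h3 : v - δ < ⨆ k, μ (τ '' D (Function.update f n k) (n+1)) := h2.trans_le h1.le
    obtain ⟨k, hk⟩ := lt_iSup_iff.1 h3
    refine ⟨k, ?_⟩
    calc v = (v - δ) + δ := (tsub_add_cancel_of_le h.le).symm
    _ ≤ μ (τ '' D (Function.update f n k) (n+1)) + δ := add_le_add_left hk.le _

lemma geom_sum_le (ε : ℝ≥0∞) (n : ℕ) :
    ∑ i ∈ Finset.range n, ε * 2⁻¹ ^ (i+1) ≤ ε := by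
  have h1 : ∑ i ∈ Finset.range n, ε * 2⁻¹ ^ (i+1) ≤ ∑' i : ℕ, ε * 2⁻¹ ^ (i+1) :=
    ENNReal.sum_le_tsum _
  refine h1.trans ?_
  rw [ENNReal.tsum_mul_left]
  have h2 : ∑' i : ℕ, (2⁻¹ : ℝ≥0∞) ^ (i+1) = (∑' i : ℕ, (2⁻¹ : ℝ≥0∞) ^ i) * 2⁻¹ := by
    rw [← ENNReal.tsum_mul_right]
    congr 1; ext i; rw [pow_succ]
  rw [h2, ENNReal.tsum_geometric]
  have h3 : (1 - 2⁻¹ : ℝ≥0∞) = 2⁻¹ := by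
    rw [ENNReal.one_sub_inv_two]
  rw [h3, inv_inv]
  have h4 : ((2 : ℝ≥0∞) * 2⁻¹) = 1 := ENNReal.mul_inv_cancel (by norm_num) (by norm_num)
  rw [h4, mul_one]

lemma compact_C (σ : ℕ → ℕ) : IsCompact {x : ℕ → ℕ | ∀ i, x i ≤ σ i} := by
  have h : {x : ℕ → ℕ | ∀ i, x i ≤ σ i} = Set.pi univ (fun i => Set.Iic (σ i)) := by
    ext x; simp [Set.mem_pi, Set.mem_Iic, Pi.le_def]
  rw [h]
  exact isCompact_univ_pi fun i => (Set.finite_Iic _).isCompact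

/-- key topological fact: the intersection of the closures of the images of the
truncated bounded sets is contained in the image of the fully bounded (compact) set. -/
lemma incl (hτ : Continuous τ) (σ : ℕ → ℕ) :
    (⋂ n, closure (τ '' D σ n)) ⊆ τ '' {x | ∀ i, x i ≤ σ i} := by
  intro y hy
  simp only [mem_iInter] at hy
  -- countable antitone basis of nhds of y
  obtain ⟨V, hV⟩ := (𝓝 y).exists_antitone_basis
  -- pick approximating points
  have hz : ∀ n : ℕ, ∃ x, x ∈ D σ n ∧ τ x ∈ V n := by
    intro n
    have h1 : (V n ∩ τ '' D σ n).Nonempty :=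
      mem_closure_iff_nhds.1 (hy n) _ (hV.mem n)
    obtain ⟨p, hp1, x, hx, rfl⟩ := h1
    exact ⟨x, hx, hp1⟩
  choose z hz1 hz2 using hz
  have htend : Tendsto (fun n => τ (z n)) atTop (𝓝 y) := hV.tendsto hz2
  -- ultrafilter extending atTop
  let U : Ultrafilter ℕ := Ultrafilter.of atTop
  have hUle : (U : Filter ℕ) ≤ atTop := Ultrafilter.of_le _
  -- along U, each coordinate stabilizes to a value ≤ σ i
  have hcoord : ∀ i : ℕ, ∃ v : ℕ, v ≤ σ i ∧ {n | z n i = v} ∈ U := by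
    intro i
    have h1 : {n | z n i ≤ σ i} ∈ U := by
      refine hUle (mem_atTop_sets.2 ⟨i + 1, fun n hn => ?_⟩)
      exact hz1 n i hn
    have h2 : {n | z n i ≤ σ i} ⊆ ⋃ v ∈ Set.Iic (σ i), {n | z n i = v} := by
      intro n hn
      exact mem_biUnion hn rfl
    have h3 : (⋃ v ∈ Set.Iic (σ i), {n | z n i = v}) ∈ U := U.mem_of_superset h1 h2
    obtain ⟨v, hv1, hv2⟩ := (Ultrafilter.finite_biUnion_mem_iff (Set.finite_Iic _)).1 h3
    exact ⟨v, hv1, hv2⟩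
  choose x hx1 hx2 using hcoord
  -- z tends to x along U
  have hzx : Tendsto z (U : Filter ℕ) (𝓝 x) := by
    rw [tendsto_pi_nhds]
    intro i
    rw [nhds_discrete, tendsto_pure]
    exact hx2 i
  have h4 : Tendsto (fun n => τ (z n)) (U : Filter ℕ) (𝓝 (τ x)) :=
    (hτ.tendsto x).comp hzx
  have h5 : Tendsto (fun n => τ (z n)) (U : Filter ℕ) (𝓝 y) :=
    htend.mono_left hUle
  have : y = τ x := tendsto_nhds_unique h5 h4
  exact ⟨x, hx1, this.symm⟩

/-- inner approximation of an analytic set by a compact (hence measurable) subset -/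
lemma key (hτ : Continuous τ) (ε : ℝ≥0∞) (hε : ε ≠ 0) :
    ∃ K : Set (ℕ → Bool), MeasurableSet K ∧ K ⊆ range τ ∧ μ (range τ) ≤ μ K + ε := by
  have hstep : ∀ (f : ℕ → ℕ) (n : ℕ), ∃ k,
      μ (τ '' D f n) ≤ μ (τ '' D (Function.update f n k) (n+1)) + ε * 2⁻¹ ^ (n+1) := by
    intro f n
    refine step τ μ hτ f n _ ?_
    exact mul_ne_zero hε (pow_ne_zero _ (by norm_num))
  choose c hc using hstep
  let s : ℕ → (ℕ → ℕ) := fun n =>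
    Nat.rec (fun _ => 0) (fun n f => Function.update f n (c f n)) n
  have hs_succ : ∀ n, s (n+1) = Function.update (s n) n (c (s n) n) := fun n => rfl
  set σ : ℕ → ℕ := fun n => s (n+1) n with hσ
  have hagree : ∀ n, ∀ i < n, s n i = σ i := by
    intro n
    induction n with
    | zero => intro i hi; omega
    | succ n ih =>
      intro i hi
      rcases Nat.lt_succ_iff_lt_or_eq.1 hi with h | h
      · rw [hs_succ, Function.update_of_ne h.ne, ih i h]
      · subst h; rfl
  have hD : ∀ n, D (s n) n = D σ n := fun n => D_congr n (hagree n)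
  have hinv : ∀ n, μ (range τ) ≤ μ (τ '' D σ n) + ∑ i ∈ Finset.range n, ε * 2⁻¹ ^ (i+1) := by
    intro n
    induction n with
    | zero => simp [D_zero, image_univ]
    | succ n ih =>
      have h1 := hc (s n) n
      rw [← hs_succ n, hD n, hD (n+1)] at h1
      calc μ (range τ) ≤ μ (τ '' D σ n) + ∑ i ∈ Finset.range n, ε * 2⁻¹ ^ (i+1) := ih
        _ ≤ (μ (τ '' D σ (n+1)) + ε * 2⁻¹ ^ (n+1)) + ∑ i ∈ Finset.range n, ε * 2⁻¹ ^ (i+1) :=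
            add_le_add_left h1 _
        _ = μ (τ '' D σ (n+1)) + ∑ i ∈ Finset.range (n+1), ε * 2⁻¹ ^ (i+1) := by
            rw [Finset.sum_range_succ]; ring
  set C : Set (ℕ → ℕ) := {x | ∀ i, x i ≤ σ i} with hC
  have hKm : MeasurableSet (τ '' C) := (((compact_C σ).image hτ).isClosed).measurableSet
  refine ⟨τ '' C, hKm, image_subset_range _ _, ?_⟩
  have hanti : Antitone (fun n => closure (τ '' D σ n)) :=
    fun n m h => closure_mono (image_mono (D_anti σ h))
  have hiInf : μ (⋂ n, closure (τ '' D σ n)) = ⨅ n, μ (closure (τ '' D σ n)) :=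
    hanti.measure_iInter (fun n => isClosed_closure.measurableSet.nullMeasurableSet)
      ⟨0, measure_ne_top μ _⟩
  have h6 : μ (range τ) ≤ (⨅ n, μ (closure (τ '' D σ n))) + ε := by
    rw [ENNReal.iInf_add]
    refine le_iInf fun n => ?_
    calc μ (range τ) ≤ μ (τ '' D σ n) + ∑ i ∈ Finset.range n, ε * 2⁻¹ ^ (i+1) := hinv n
      _ ≤ μ (closure (τ '' D σ n)) + ε :=
          add_le_add (measure_mono subset_closure) (geom_sum_le ε n)
  calc μ (range τ) ≤ (⨅ n, μ (closure (τ '' D σ n))) + ε := h6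
    _ = μ (⋂ n, closure (τ '' D σ n)) + ε := by rw [hiInf]
    _ ≤ μ (τ '' C) + ε := add_le_add_left (measure_mono (incl τ hτ σ)) _

end

end Stmt7Aux



open Stmt7Aux in
/-- Every analytic subset of the Cantor space `M = {0,1}^ℕ` is universally measurable:
for every analytic `A ⊆ M` and every finite (Borel) measure `μ` on `M` there are Borel
sets `B⁻ ⊆ A ⊆ B⁺` with `μ(B⁺ \ B⁻) = 0`. -/
theorem stmt7 (A : Set (ℕ → Bool)) (hA : MeasureTheory.AnalyticSet A)
    (μ : Measure (ℕ → Bool)) (hμ : IsFiniteMeasure μ) :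
    ∃ Bm Bp : Set (ℕ → Bool), MeasurableSet Bm ∧ MeasurableSet Bp ∧
      Bm ⊆ A ∧ A ⊆ Bp ∧ μ (Bp \ Bm) = 0 := by
  rw [AnalyticSet] at hA
  rcases hA with rfl | ⟨τ, hτ, rfl⟩
  · exact ⟨∅, ∅, MeasurableSet.empty, MeasurableSet.empty, le_rfl, le_rfl, by simp⟩
  · have hK : ∀ k : ℕ, ∃ K : Set (ℕ → Bool), MeasurableSet K ∧ K ⊆ range τ ∧
        μ (range τ) ≤ μ K + ((k : ℝ≥0∞) + 1)⁻¹ := by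
      intro k
      exact key τ μ hτ _ (by simp)
    choose K hK1 hK2 hK3 using hK
    refine ⟨⋃ k, K k, toMeasurable μ (range τ), MeasurableSet.iUnion hK1,
      measurableSet_toMeasurable _ _, iUnion_subset hK2, subset_toMeasurable _ _, ?_⟩
    have hle : μ (toMeasurable μ (range τ)) ≤ μ (⋃ k, K k) := by
      rw [measure_toMeasurable]
      refine ENNReal.le_of_forall_pos_le_add fun δ hδ _ => ?_
      obtain ⟨k, hk⟩ := ENNReal.exists_inv_nat_lt (by exact_mod_cast hδ.ne' : (δ : ℝ≥0∞) ≠ 0)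
      calc μ (range τ) ≤ μ (K k) + ((k : ℝ≥0∞) + 1)⁻¹ := hK3 k
        _ ≤ μ (⋃ k, K k) + δ := by
            refine add_le_add (measure_mono (subset_iUnion K k)) ?_
            refine le_trans ?_ hk.le
            exact ENNReal.inv_le_inv.2 (by exact_mod_cast Nat.le_succ k)
    have hsub : (⋃ k, K k) ⊆ toMeasurable μ (range τ) :=
      (iUnion_subset hK2).trans (subset_toMeasurable _ _)
    rw [measure_diff hsub (MeasurableSet.iUnion hK1).nullMeasurableSet (measure_ne_top μ _)]
    exact tsub_eq_zero_of_le hle
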